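/- Fix N ≥ 1 and view H̃ = H̃(r) as a matrix-valued function of r, with H̃_{ij} = (−1)^N(ψ_{i+j−N}(2r²) − ψ_{i+j−N+1}(2r²)) (ψ_n ≡ 0 for n < 0). Define Q by Q_{ij} = −2r if i = j, −4r if i > j, and 0 if i < j. Then dH̃/dr = Q·H̃, i.e. for all i,j: ∂_r H̃_{ij} = (−1)^N · 2r · (ψ_{i+j−N}(2r²) + ψ_{i+j−N+1}(2r²)). -/

import Mathlib

open MeasureTheory

/-- The `k`-th (normalized) Laguerre polynomial. -/
noncomputable def Lag (k : ℕ) (x : ℝ) : ℝ :=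
  ∑ l ∈ Finset.range (k + 1), (k.choose l : ℝ) * (-1) ^ l / (Nat.factorial l) * x ^ l

/-- The Laguerre function `ψ_n(x) = e^{-x/2} L_n(x)` for `n ≥ 0`,
extended by `ψ_n ≡ 0` for `n < 0`. -/
noncomputable def psiZ (n : ℤ) (x : ℝ) : ℝ :=
  if 0 ≤ n then Real.exp (-x / 2) * Lag n.toNat x else 0

/-- The Laguerre function with natural index. -/
noncomputable def psiL (n : ℕ) (x : ℝ) : ℝ := Real.exp (-x / 2) * Lag n x

/-- The matrix `H̃`, with `H̃_{ij} = (-1)^N (ψ_{i+j-N}(2r²) - ψ_{i+j-N+1}(2r²))`. -/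
noncomputable def Ht (N : ℕ) (r : ℝ) : Matrix (Fin N) (Fin N) ℝ :=
  fun i j => (-1) ^ N *
    (psiZ ((i : ℤ) + (j : ℤ) - (N : ℤ)) (2 * r ^ 2) -
     psiZ ((i : ℤ) + (j : ℤ) - (N : ℤ) + 1) (2 * r ^ 2))

/-- The matrix `Q`: `-2r` on the diagonal, `-4r` below it, `0` above it. -/
noncomputable def Qm (N : ℕ) (r : ℝ) : Matrix (Fin N) (Fin N) ℝ :=
  fun i j => if (i : ℕ) = (j : ℕ) then -2 * r
    else if (j : ℕ) < (i : ℕ) then -4 * r else 0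

/-- The constant vector `u` with all entries `(-1)^{N-1}`. -/
noncomputable def uVec (N : ℕ) : Fin N → ℝ := fun _ => (-1) ^ (N - 1)

/-- The alternating vector `v` with entries `v_i = 2(-1)^i`. -/
noncomputable def vVec (N : ℕ) : Fin N → ℝ := fun i => 2 * (-1) ^ (i : ℕ)

/- ### Auxiliary lemmas -/

noncomputable def dLag (k : ℕ) (x : ℝ) : ℝ :=
  ∑ l ∈ Finset.range (k + 1), (k.choose l : ℝ) * (-1) ^ l / (Nat.factorial l) * (l * x ^ (l - 1))

lemma lag_hasDerivAt (n : ℕ) (x : ℝ) : HasDerivAt (fun y => Lag n y) (dLag n x) x := by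
  unfold Lag dLag
  apply HasDerivAt.fun_sum
  intro l _
  exact (hasDerivAt_pow l x).const_mul _

lemma dLag_shift (n : ℕ) (x : ℝ) :
    dLag n x = ∑ l ∈ Finset.range (n + 1),
      (n.choose (l+1) : ℝ) * (-1) ^ (l+1) / (Nat.factorial (l+1)) * ((l+1) * x ^ l) := by
  unfold dLag
  rw [Finset.sum_range_succ' (fun l => (n.choose l : ℝ) * (-1) ^ l / (Nat.factorial l) * (l * x ^ (l - 1)))]
  conv_rhs => rw [Finset.sum_range_succ]
  simp [Nat.choose_succ_self]

lemma dLag_diff (n : ℕ) (x : ℝ) : dLag n x - dLag (n+1) x = Lag n x := by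
  rw [dLag_shift, dLag_shift, Lag]
  rw [Finset.sum_range_succ (fun l => ((n+1).choose (l+1) : ℝ) * (-1) ^ (l+1) / (Nat.factorial (l+1)) * (((l:ℝ)+1) * x ^ l))]
  simp only [Nat.choose_succ_self, Nat.cast_zero, zero_mul, zero_div, add_zero]
  rw [← Finset.sum_sub_distrib]
  apply Finset.sum_congr rfl
  intro l _
  have hc : ((n+1).choose (l+1) : ℝ) = (n.choose l : ℝ) + (n.choose (l+1) : ℝ) := by
    rw [Nat.choose_succ_succ]; push_cast; ring
  have hf : (Nat.factorial (l+1) : ℝ) = ((l:ℝ)+1) * Nat.factorial l := by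
    rw [Nat.factorial_succ]; push_cast; ring
  have h0 : (Nat.factorial l : ℝ) ≠ 0 := Nat.cast_ne_zero.mpr (Nat.factorial_ne_zero l)
  have h0' : ((l:ℝ)+1) ≠ 0 := by positivity
  rw [hc, hf]
  field_simp
  ring

lemma lag_zero (x : ℝ) : Lag 0 x = 1 := by simp [Lag]

lemma exp_half_hasDerivAt (x : ℝ) :
    HasDerivAt (fun y : ℝ => Real.exp (-y / 2)) (Real.exp (-x / 2) * (-1/2)) x := by
  have h1 : HasDerivAt (fun y : ℝ => -y / 2) (-1/2) x := (hasDerivAt_id x).neg.div_const 2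
  exact h1.exp

lemma psiL_diff_hasDerivAt (n : ℕ) (x : ℝ) :
    HasDerivAt (fun y => psiL n y - psiL (n+1) y) ((psiL n x + psiL (n+1) x) / 2) x := by
  have he := exp_half_hasDerivAt x
  have hL : HasDerivAt (fun y => Lag n y - Lag (n+1) y) (dLag n x - dLag (n+1) x) x :=
    (lag_hasDerivAt n x).sub (lag_hasDerivAt (n+1) x)
  have h := he.fun_mul hL
  have heq : (fun y => psiL n y - psiL (n+1) y)
      = fun y => Real.exp (-y / 2) * (Lag n y - Lag (n+1) y) := by
    funext y; simp [psiL]; ring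
  rw [heq]
  refine h.congr_deriv ?_
  rw [dLag_diff]
  simp [psiL]
  ring

lemma psiZ_diff_hasDerivAt (n : ℤ) (x : ℝ) :
    HasDerivAt (fun y => psiZ n y - psiZ (n+1) y) ((psiZ n x + psiZ (n+1) x) / 2) x := by
  rcases le_or_gt 0 n with hn | hn
  · have hn1 : (0:ℤ) ≤ n + 1 := by omega
    have ht : (n+1).toNat = n.toNat + 1 := by omega
    have heq : (fun y => psiZ n y - psiZ (n+1) y)
        = fun y => psiL n.toNat y - psiL (n.toNat + 1) y := by
      funext y; simp [psiZ, psiL, hn, hn1, ht]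
    rw [heq]
    have := psiL_diff_hasDerivAt n.toNat x
    convert this using 1
    simp [psiZ, psiL, hn, hn1, ht]
  · rcases eq_or_lt_of_le (by omega : n + 1 ≤ 0) with h0 | h0
    · have hn1 : n + 1 = 0 := h0
      have heq2 : (fun y => psiZ n y - psiZ (n+1) y)
          = fun y => -Real.exp (-y / 2) := by
        funext y
        simp [psiZ, psiL, hn1, not_le.mpr hn, lag_zero]
      rw [heq2]
      have h := (exp_half_hasDerivAt x).neg
      refine h.congr_deriv ?_
      simp [psiZ, hn1, not_le.mpr hn, lag_zero]
      ring
    · have heq : (fun y => psiZ n y - psiZ (n+1) y) = fun _ => (0:ℝ) := by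
        funext y; simp [psiZ, not_le.mpr hn, not_le.mpr h0]
      rw [heq]
      have : (psiZ n x + psiZ (n+1) x) / 2 = 0 := by
        simp [psiZ, not_le.mpr hn, not_le.mpr h0]
      rw [this]
      exact hasDerivAt_const x 0

lemma Ht_hasDerivAt (N : ℕ) (r : ℝ) (i j : Fin N) :
    HasDerivAt (fun s : ℝ => Ht N s i j)
      ((-1) ^ N * (2 * r) *
        (psiZ ((i : ℤ) + (j : ℤ) - (N : ℤ)) (2 * r ^ 2) +
         psiZ ((i : ℤ) + (j : ℤ) - (N : ℤ) + 1) (2 * r ^ 2))) r := by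
  have h2 : HasDerivAt (fun s : ℝ => 2 * s ^ 2) (4 * r) r := by
    have h := (hasDerivAt_pow 2 r).const_mul (2:ℝ)
    refine h.congr_deriv ?_
    ring
  set m : ℤ := (i : ℤ) + (j : ℤ) - (N : ℤ) with hm
  have hc := (psiZ_diff_hasDerivAt m (2 * r ^ 2)).comp r h2
  have h := hc.const_mul ((-1:ℝ) ^ N)
  have heq : (fun s : ℝ => Ht N s i j)
      = fun s : ℝ => (-1:ℝ) ^ N *
        ((fun y => psiZ m y - psiZ (m+1) y) ∘ (fun s : ℝ => 2 * s ^ 2)) s := by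
    funext s; simp [Ht, Function.comp, hm]
  rw [heq]
  refine h.congr_deriv ?_
  ring

theorem stmt12 (N : ℕ) (hN : 1 ≤ N) (r : ℝ) (i j : Fin N) :
    deriv (fun s : ℝ => Ht N s i j) r = (Qm N r * Ht N r) i j ∧
    deriv (fun s : ℝ => Ht N s i j) r
      = (-1) ^ N * (2 * r) *
          (psiZ ((i : ℤ) + (j : ℤ) - (N : ℤ)) (2 * r ^ 2) +
           psiZ ((i : ℤ) + (j : ℤ) - (N : ℤ) + 1) (2 * r ^ 2)) := by
  have hd := (Ht_hasDerivAt N r i j).deriv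
  refine ⟨?_, hd⟩
  rw [hd]
  set x : ℝ := 2 * r ^ 2 with hx
  set p : ℕ → ℝ := fun k => psiZ ((k : ℤ) + (j : ℤ) - (N : ℤ)) x with hp
  set G : ℕ → ℝ := fun k =>
    (if (i : ℕ) = k then -2 * r else if k < (i : ℕ) then -4 * r else 0) *
      ((-1:ℝ) ^ N * (p k - p (k+1))) with hG
  have hstep1 : (Qm N r * Ht N r) i j = ∑ k ∈ Finset.range N, G k := by
    rw [Matrix.mul_apply]
    rw [← Fin.sum_univ_eq_sum_range G N]
    apply Finset.sum_congr rfl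
    intro k _
    have harg : ((((k : ℕ) + 1 : ℕ)) : ℤ) + (j : ℤ) - (N : ℤ)
        = (k : ℤ) + (j : ℤ) - (N : ℤ) + 1 := by push_cast; ring
    simp only [hG, hp, Qm, Ht, harg, ← hx]
  rw [hstep1]
  have hsub : ∑ k ∈ Finset.range N, G k = ∑ k ∈ Finset.range ((i : ℕ) + 1), G k := by
    symm
    apply Finset.sum_subset (Finset.range_subset_range.mpr (by omega : (i : ℕ) + 1 ≤ N))
    intro n _ hn
    simp only [Finset.mem_range] at hn
    simp only [hG]
    rw [if_neg (by omega), if_neg (by omega)]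
    ring
  rw [hsub, Finset.sum_range_succ]
  have hGi : G (i : ℕ) = -2 * r * ((-1:ℝ) ^ N * (p (i : ℕ) - p ((i : ℕ) + 1))) := by
    simp [hG]
  have hlow : ∑ k ∈ Finset.range (i : ℕ), G k
      = (-4 * r * (-1:ℝ) ^ N) * (p 0 - p (i : ℕ)) := by
    have : ∑ k ∈ Finset.range (i : ℕ), G k
        = ∑ k ∈ Finset.range (i : ℕ), (-4 * r * (-1:ℝ) ^ N) * (p k - p (k+1)) := by
      apply Finset.sum_congr rfl
      intro n hn
      simp only [Finset.mem_range] at hn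
      simp only [hG]
      rw [if_neg (by omega), if_pos (by omega)]
      ring
    rw [this, ← Finset.mul_sum, Finset.sum_range_sub' p]
  have hp0 : p 0 = 0 := by
    have hjN : ¬ (0:ℤ) ≤ ((0:ℕ) : ℤ) + (j : ℤ) - (N : ℤ) := by
      have := j.isLt; push_cast; omega
    simp only [hp, psiZ, if_neg hjN]
  have hpi : p (i : ℕ) = psiZ ((i : ℤ) + (j : ℤ) - (N : ℤ)) x := rfl
  have hpi1 : p ((i : ℕ) + 1) = psiZ ((i : ℤ) + (j : ℤ) - (N : ℤ) + 1) x := by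
    simp only [hp]
    congr 1
    push_cast; ring
  rw [hGi, hlow, hp0, hpi, hpi1]
  ring
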